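/- Let N ≥ 3 be an integer. If v ∈ ℚ^N is a rational vector lying in the topological frontier of the closure of the Tits cone T_N (that is, in the closure of T_N but not in its interior), then there exists g ∈ G_N with g·v ∈ D_N. In particular, every rational vector belonging to the closure of T_N already belongs to T_N. -/

import Mathlib

open Matrix

/-- The matrix `M_{N,j}`: identity except in the `j`-th column, whose `j`-th entry
is `-1` and whose other entries are all `2`. -/
noncomputable def Mmat (N : ℕ) (j : Fin N) : Matrix (Fin N) (Fin N) ℝ :=
  Matrix.of fun i k => if k = j then (if i = j then -1 else 2) else (if i = k then 1 else 0)

/-- The matrix `B_N`: diagonal entries `-1`, off-diagonal entries `1`. -/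
noncomputable def Bmat (N : ℕ) : Matrix (Fin N) (Fin N) ℝ :=
  Matrix.of fun i k => if i = k then -1 else 1

/-- The symmetric bilinear form `b_N(v,w) = vᵗ B_N w` on `ℝ^N`. -/
noncomputable def bform (N : ℕ) (v w : Fin N → ℝ) : ℝ := v ⬝ᵥ (Bmat N).mulVec w

/-- The subgroup of `GL_N(ℝ)` generated by the transposed matrices `M_{N,j}ᵗ`. -/
noncomputable def Ggrp (N : ℕ) : Subgroup (GL (Fin N) ℝ) :=
  Subgroup.closure {g | ∃ j : Fin N, (g : Matrix (Fin N) (Fin N) ℝ) = (Mmat N j)ᵀ}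

/-- The fundamental cone `D_N = {w : b_N(w, α_i) ≥ 0 for all i}`. -/
def Dcone (N : ℕ) : Set (Fin N → ℝ) := {w | ∀ i : Fin N, 0 ≤ bform N w (Pi.single i 1)}

/-- The Tits cone `T_N = ⋃_{g ∈ G_N} g (D_N)`. -/
def Tcone (N : ℕ) : Set (Fin N → ℝ) :=
  {v | ∃ g ∈ Ggrp N, ∃ w ∈ Dcone N, v = (g : Matrix (Fin N) (Fin N) ℝ).mulVec w}

/-- The vector `c_j = u_N - (N-2) α_j`: coordinates `1` except the `j`-th which is `-(N-3)`. -/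
noncomputable def cvec (N : ℕ) (j : Fin N) : Fin N → ℝ :=
  fun i => if i = j then -((N : ℝ) - 3) else 1

/-- The integral matrix `M_{N,j}`. -/
def MmatZ (N : ℕ) (j : Fin N) : Matrix (Fin N) (Fin N) ℤ :=
  Matrix.of fun i k => if k = j then (if i = j then -1 else 2) else (if i = k then 1 else 0)

/-- The integral matrix `B_N`. -/
def BmatZ (N : ℕ) : Matrix (Fin N) (Fin N) ℤ :=
  Matrix.of fun i k => if i = k then -1 else 1

/-- The bilinear form `b_N` on `ℤ^N`. -/
def bformZ (N : ℕ) (v w : Fin N → ℤ) : ℤ := v ⬝ᵥ (BmatZ N).mulVec w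

noncomputable def sfun (N : ℕ) (v : Fin N → ℝ) : ℝ := ∑ i, v i

noncomputable def reflv (N : ℕ) (j : Fin N) (v : Fin N → ℝ) : Fin N → ℝ :=
  fun i => if i = j then 2 * sfun N v - 3 * v j else v i

lemma sum_ite_eq_gen {N : ℕ} (j : Fin N) (a : ℝ) (v : Fin N → ℝ) :
    ∑ i, (if i = j then a else v i) = (∑ i, v i) + a - v j := by
  have h : ∀ i, (if i = j then a else v i) = v i + (if i = j then a - v j else 0) := by
    intro i; by_cases h : i = j <;> simp [h]
  rw [Finset.sum_congr rfl fun i _ => h i, Finset.sum_add_distrib,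
    Finset.sum_ite_eq' Finset.univ j (fun _ => a - v j)]
  simp; ring

lemma sfun_reflv {N : ℕ} (j : Fin N) (v : Fin N → ℝ) :
    sfun N (reflv N j v) = 3 * sfun N v - 4 * v j := by
  unfold reflv
  unfold sfun
  rw [sum_ite_eq_gen]
  ring

lemma reflv_apply_self {N : ℕ} (j : Fin N) (v : Fin N → ℝ) :
    reflv N j v j = 2 * sfun N v - 3 * v j := by simp [reflv]

lemma reflv_reflv {N : ℕ} (j : Fin N) (v : Fin N → ℝ) :
    reflv N j (reflv N j v) = v := by
  funext i
  have hs := sfun_reflv j v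
  by_cases h : i = j
  · rw [show reflv N j (reflv N j v) i
        = 2 * sfun N (reflv N j v) - 3 * reflv N j v j from by simp [reflv, h],
      hs, reflv_apply_self, h]
    ring
  · simp [reflv, h]

lemma mulVec_Mt {N : ℕ} (j : Fin N) (v : Fin N → ℝ) :
    ((Mmat N j)ᵀ).mulVec v = reflv N j v := by
  funext i
  unfold Matrix.mulVec dotProduct reflv Mmat sfun
  simp only [transpose_apply, of_apply]
  by_cases h : i = j
  · simp only [if_pos h]
    have h2 : ∀ k : Fin N, (if k = j then (-1:ℝ) else 2) * v k
        = 2 * v k + (if k = j then -3 * v k else 0) := by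
      intro k; by_cases hk : k = j <;> simp [hk]; ring
    rw [Finset.sum_congr rfl fun k _ => h2 k, Finset.sum_add_distrib,
      Finset.sum_ite_eq' Finset.univ j (fun k => -3 * v k)]
    simp [Finset.mul_sum]; ring
  · simp only [if_neg h]
    have h2 : ∀ k : Fin N, (if k = i then (1:ℝ) else 0) * v k = if k = i then v k else 0 := by
      intro k; by_cases hk : k = i <;> simp [hk]
    rw [Finset.sum_congr rfl fun k _ => h2 k, Finset.sum_ite_eq' Finset.univ i v]
    simp

lemma bform_eq {N : ℕ} (v w : Fin N → ℝ) :
    bform N v w = sfun N v * sfun N w - 2 * ∑ i, v i * w i := by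
  unfold bform Matrix.mulVec dotProduct Bmat sfun
  simp only [of_apply]
  have h : ∀ i : Fin N, (∑ k, (if i = k then (-1:ℝ) else 1) * w k)
      = (∑ k, w k) - 2 * w i := by
    intro i
    have h2 : ∀ k : Fin N, (if i = k then (-1:ℝ) else 1) * w k
        = w k + (if k = i then -2 * w k else 0) := by
      intro k
      by_cases hk : i = k
      · rw [if_pos hk, if_pos hk.symm]; ring
      · rw [if_neg hk, if_neg fun h' => hk h'.symm]; ring
    rw [Finset.sum_congr rfl fun k _ => h2 k, Finset.sum_add_distrib,
      Finset.sum_ite_eq' Finset.univ i (fun k => -2 * w k)]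
    simp; ring
  rw [Finset.sum_congr rfl fun i _ => congrArg (v i * ·) (h i)]
  have h3 : ∀ i : Fin N, v i * ((∑ k, w k) - 2 * w i)
      = v i * (∑ k, w k) - 2 * (v i * w i) := fun i => by ring
  rw [Finset.sum_congr rfl fun i _ => h3 i, Finset.sum_sub_distrib,
    ← Finset.sum_mul, ← Finset.mul_sum]
  try ring

lemma bform_single {N : ℕ} (v : Fin N → ℝ) (i : Fin N) :
    bform N v (Pi.single i 1) = sfun N v - 2 * v i := by
  rw [bform_eq]
  have hp : ∀ k : Fin N, (Pi.single i 1 : Fin N → ℝ) k = if k = i then 1 else 0 := by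
    intro k; rcases eq_or_ne k i with h | h
    · subst h; simp
    · simp [Pi.single_eq_of_ne h, h]
  have h1 : sfun N ((Pi.single i 1 : Fin N → ℝ)) = 1 := by
    unfold sfun
    rw [Finset.sum_congr rfl fun k _ => hp k, Finset.sum_ite_eq' Finset.univ i fun _ => (1:ℝ)]
    simp
  have h2 : (∑ k, v k * (Pi.single i 1 : Fin N → ℝ) k) = v i := by
    have : ∀ k : Fin N, v k * (Pi.single i 1 : Fin N → ℝ) k = if k = i then v k else 0 := by
      intro k; rw [hp k]; by_cases hk : k = i <;> simp [hk]
    rw [Finset.sum_congr rfl fun k _ => this k, Finset.sum_ite_eq' Finset.univ i v]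
    simp
  rw [h1, h2]; ring

lemma bform_reflv {N : ℕ} (j : Fin N) (v w : Fin N → ℝ) :
    bform N (reflv N j v) (reflv N j w) = bform N v w := by
  rw [bform_eq, bform_eq, sfun_reflv, sfun_reflv]
  have h : (∑ i, reflv N j v i * reflv N j w i)
      = (∑ i, v i * w i) + (2 * sfun N v - 3 * v j) * (2 * sfun N w - 3 * w j) - v j * w j := by
    have h2 : ∀ i : Fin N, reflv N j v i * reflv N j w i
        = if i = j then (2 * sfun N v - 3 * v j) * (2 * sfun N w - 3 * w j) else v i * w i := by
      intro i; unfold reflv; by_cases h : i = j <;> simp [h]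
    rw [Finset.sum_congr rfl fun i _ => h2 i, sum_ite_eq_gen]
  rw [h]; ring

/-! ### The GL element of a reflection -/

lemma Mt_mul_Mt {N : ℕ} (j : Fin N) : (Mmat N j)ᵀ * (Mmat N j)ᵀ = 1 := by
  have hv : ∀ v : Fin N → ℝ, ((Mmat N j)ᵀ * (Mmat N j)ᵀ).mulVec v = v := by
    intro v
    rw [← Matrix.mulVec_mulVec, mulVec_Mt, mulVec_Mt, reflv_reflv]
  ext i k
  have h := congrFun (hv (Pi.single k 1)) i
  rw [Matrix.mulVec_single] at h
  simp only [MulOpposite.op_one, one_smul, Matrix.col_apply] at h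
  rw [h, Matrix.one_apply, Pi.single_apply]

noncomputable def reflGL (N : ℕ) (j : Fin N) : GL (Fin N) ℝ :=
  ⟨(Mmat N j)ᵀ, (Mmat N j)ᵀ, Mt_mul_Mt j, Mt_mul_Mt j⟩

lemma reflGL_mem {N : ℕ} (j : Fin N) : reflGL N j ∈ Ggrp N :=
  Subgroup.subset_closure ⟨j, rfl⟩

/-! ### The orbit set of the all-ones vector -/

inductive SS (N : ℕ) : (Fin N → ℝ) → Prop
  | base : SS N (fun _ => 1)
  | step (v : Fin N → ℝ) (j : Fin N) (hv : SS N v) (hb : 0 < sfun N v - 2 * v j) :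
      SS N (reflv N j v)

lemma SS_inv {N : ℕ} (hN : 3 ≤ N) {v : Fin N → ℝ} (hv : SS N v) :
    (∀ i, 1 ≤ v i) ∧ (∀ m : Fin N, sfun N v - 2 * v m < 0 → SS N (reflv N m v)) := by
  induction hv with
  | base =>
    have hs : sfun N (fun _ => (1:ℝ)) = N := by simp [sfun]
    constructor
    · intro i; exact le_refl 1
    · intro m hm
      exfalso
      rw [hs] at hm
      have : (3:ℝ) ≤ N := by exact_mod_cast hN
      norm_num at hm; linarith
  | step w j hw hb ih =>
    obtain ⟨ih1, _⟩ := ih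
    have hrs := sfun_reflv j w
    constructor
    · intro i
      by_cases h : i = j
      · rw [h, reflv_apply_self]
        have := ih1 j
        linarith
      · show 1 ≤ reflv N j w i
        simp only [reflv, if_neg h]
        exact ih1 i
    · intro m hm
      by_cases hmj : m = j
      · subst hmj
        rw [reflv_reflv]
        exact hw
      · exfalso
        have hvm : reflv N j w m = w m := by simp [reflv, hmj]
        rw [hrs, hvm] at hm
        -- R := sfun w - w m - w j ≥ 0
        have hR : 0 ≤ sfun N w - w m - w j := by
          have h1 : ({m, j} : Finset (Fin N)) ⊆ Finset.univ := Finset.subset_univ _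
          have h2 : ∑ i ∈ ({m, j} : Finset (Fin N)), w i ≤ ∑ i, w i :=
            Finset.sum_le_sum_of_subset_of_nonneg h1
              (fun i _ _ => le_trans zero_le_one (ih1 i))
          rw [Finset.sum_insert (by simp [hmj]), Finset.sum_singleton] at h2
          unfold sfun; linarith
        rcases le_or_gt (w j) (w m) with h | h
        · linarith
        · linarith

lemma SS_reflv {N : ℕ} (hN : 3 ≤ N) {v : Fin N → ℝ} (hv : SS N v) (j : Fin N) :
    SS N (reflv N j v) := by
  rcases lt_trichotomy (sfun N v - 2 * v j) 0 with h | h | h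
  · exact (SS_inv hN hv).2 j h
  · have heq : reflv N j v = v := by
      funext i
      by_cases hi : i = j
      · rw [hi, reflv_apply_self]; linarith
      · simp [reflv, hi]
    rw [heq]; exact hv
  · exact SS.step v j hv h

/-! ### Group invariance lemmas -/

lemma GL_cancel {N : ℕ} (g : GL (Fin N) ℝ) (z : Fin N → ℝ) :
    (g : Matrix (Fin N) (Fin N) ℝ).mulVec
      (((g⁻¹ : GL (Fin N) ℝ) : Matrix (Fin N) (Fin N) ℝ).mulVec z) = z := by
  rw [Matrix.mulVec_mulVec, ← Units.val_mul, mul_inv_cancel, Units.val_one, Matrix.one_mulVec]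

lemma Ggrp_bform {N : ℕ} {g : GL (Fin N) ℝ} (hg : g ∈ Ggrp N) (v w : Fin N → ℝ) :
    bform N ((g : Matrix (Fin N) (Fin N) ℝ).mulVec v)
      ((g : Matrix (Fin N) (Fin N) ℝ).mulVec w) = bform N v w := by
  unfold Ggrp at hg
  induction hg using Subgroup.closure_induction generalizing v w with
  | mem x hx =>
    obtain ⟨j, hj⟩ := hx
    rw [hj, mulVec_Mt, mulVec_Mt, bform_reflv]
  | one => rw [Units.val_one, Matrix.one_mulVec, Matrix.one_mulVec]
  | mul x y hx hy ihx ihy =>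
    rw [Units.val_mul, ← Matrix.mulVec_mulVec, ← Matrix.mulVec_mulVec, ihx, ihy]
  | inv x hx ih =>
    have h1 := ih (((x⁻¹ : GL (Fin N) ℝ) : Matrix (Fin N) (Fin N) ℝ).mulVec v)
      (((x⁻¹ : GL (Fin N) ℝ) : Matrix (Fin N) (Fin N) ℝ).mulVec w)
    rw [GL_cancel, GL_cancel] at h1
    exact h1.symm

lemma Ggrp_SS {N : ℕ} (hN : 3 ≤ N) {g : GL (Fin N) ℝ} (hg : g ∈ Ggrp N) (z : Fin N → ℝ) :
    SS N z ↔ SS N ((g : Matrix (Fin N) (Fin N) ℝ).mulVec z) := by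
  unfold Ggrp at hg
  induction hg using Subgroup.closure_induction generalizing z with
  | mem x hx =>
    obtain ⟨j, hj⟩ := hx
    rw [hj, mulVec_Mt]
    constructor
    · intro h; exact SS_reflv hN h j
    · intro h; have := SS_reflv hN h j; rwa [reflv_reflv] at this
  | one => rw [Units.val_one, Matrix.one_mulVec]
  | mul x y hx hy ihx ihy =>
    rw [Units.val_mul, ← Matrix.mulVec_mulVec]
    exact (ihy z).trans (ihx _)
  | inv x hx ih =>
    have h2 := ih (((x⁻¹ : GL (Fin N) ℝ) : Matrix (Fin N) (Fin N) ℝ).mulVec z)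
    rw [GL_cancel] at h2
    exact h2.symm

/-! ### Nonnegativity of the coordinate sum on the Tits cone -/

lemma bform_ones {N : ℕ} (x : Fin N → ℝ) :
    bform N (fun _ => 1) x = ((N : ℝ) - 2) * sfun N x := by
  rw [bform_eq]
  have h1 : sfun N (fun _ => (1:ℝ)) = N := by simp [sfun]
  have h2 : (∑ i, (1:ℝ) * x i) = sfun N x := by simp [sfun]
  rw [h1, h2]; ring

lemma bform_expand {N : ℕ} (z w : Fin N → ℝ) :
    bform N z w = ∑ i, z i * (sfun N w - 2 * w i) := by
  rw [bform_eq]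
  have h : ∀ i : Fin N, z i * (sfun N w - 2 * w i)
      = z i * sfun N w - 2 * (z i * w i) := fun i => by ring
  rw [Finset.sum_congr rfl fun i _ => h i, Finset.sum_sub_distrib, ← Finset.sum_mul,
    ← Finset.mul_sum]
  rfl

lemma sfun_Tcone_nonneg {N : ℕ} (hN : 3 ≤ N) {x : Fin N → ℝ} (hx : x ∈ Tcone N) :
    0 ≤ sfun N x := by
  obtain ⟨g, hg, w, hw, rfl⟩ := hx
  set z := ((g⁻¹ : GL (Fin N) ℝ) : Matrix (Fin N) (Fin N) ℝ).mulVec (fun _ => 1) with hz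
  have hzSS : SS N z := by
    rw [hz]
    exact (Ggrp_SS hN (inv_mem hg) (fun _ => 1)).mp SS.base
  have hz1 : ∀ i, (1:ℝ) ≤ z i := (SS_inv hN hzSS).1
  have hgz : (g : Matrix (Fin N) (Fin N) ℝ).mulVec z = (fun _ => 1) := GL_cancel g _
  have key : 0 ≤ bform N (fun _ => 1) ((g : Matrix (Fin N) (Fin N) ℝ).mulVec w) := by
    rw [← hgz, Ggrp_bform hg, bform_expand]
    apply Finset.sum_nonneg
    intro i _
    apply mul_nonneg (le_trans zero_le_one (hz1 i))
    have := hw i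
    rwa [bform_single] at this
  rw [bform_ones] at key
  have hN3 : (3:ℝ) ≤ N := by exact_mod_cast hN
  nlinarith

/-! ### Topological lemmas -/

lemma sfun_closure_nonneg {N : ℕ} (hN : 3 ≤ N) {x : Fin N → ℝ}
    (hx : x ∈ closure (Tcone N)) : 0 ≤ sfun N x := by
  have hc : IsClosed {y : Fin N → ℝ | 0 ≤ sfun N y} := by
    apply isClosed_le continuous_const
    unfold sfun
    exact continuous_finset_sum _ fun i _ => continuous_apply i
  exact closure_minimal (fun y hy => sfun_Tcone_nonneg hN hy) hc hx

lemma continuous_reflv {N : ℕ} (j : Fin N) : Continuous (reflv N j) := by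
  apply continuous_pi
  intro i
  by_cases h : i = j
  · show Continuous fun v => reflv N j v i
    have : (fun v => reflv N j v i) = fun v : Fin N → ℝ => 2 * sfun N v - 3 * v j := by
      funext v; simp [reflv, h]
    rw [this]
    have hs : Continuous (sfun N) := continuous_finset_sum _ fun k _ => continuous_apply k
    exact (continuous_const.mul hs).sub (continuous_const.mul (continuous_apply j))
  · have : (fun v => reflv N j v i) = fun v : Fin N → ℝ => v i := by
      funext v; simp [reflv, h]
    rw [this]
    exact continuous_apply i

lemma reflv_maps_Tcone {N : ℕ} (j : Fin N) : Set.MapsTo (reflv N j) (Tcone N) (Tcone N) := by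
  rintro y ⟨g, hg, w, hw, rfl⟩
  refine ⟨reflGL N j * g, mul_mem (reflGL_mem j) hg, w, hw, ?_⟩
  rw [Units.val_mul, ← Matrix.mulVec_mulVec]
  show reflv N j _ = ((reflGL N j : GL (Fin N) ℝ) : Matrix (Fin N) (Fin N) ℝ).mulVec _
  rw [show ((reflGL N j : GL (Fin N) ℝ) : Matrix (Fin N) (Fin N) ℝ) = (Mmat N j)ᵀ from rfl,
    mulVec_Mt]

lemma reflv_mem_closure {N : ℕ} (j : Fin N) {x : Fin N → ℝ}
    (hx : x ∈ closure (Tcone N)) : reflv N j x ∈ closure (Tcone N) :=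
  map_mem_closure (continuous_reflv j) hx (reflv_maps_Tcone j)

lemma bform_smul_left {N : ℕ} (c : ℝ) (v w : Fin N → ℝ) :
    bform N (c • v) w = c * bform N v w := by
  unfold bform
  rw [smul_dotProduct]
  rfl

lemma smul_Tcone {N : ℕ} {c : ℝ} (hc : 0 < c) {x : Fin N → ℝ} (hx : x ∈ Tcone N) :
    c • x ∈ Tcone N := by
  obtain ⟨g, hg, w, hw, rfl⟩ := hx
  refine ⟨g, hg, c • w, fun i => ?_, ?_⟩
  · rw [bform_smul_left]
    exact mul_nonneg hc.le (hw i)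
  · rw [Matrix.mulVec_smul]

lemma smul_mem_closure_Tcone {N : ℕ} {c : ℝ} (hc : 0 < c) {x : Fin N → ℝ}
    (hx : x ∈ closure (Tcone N)) : c • x ∈ closure (Tcone N) :=
  map_mem_closure (continuous_const_smul c) hx (fun _ hy => smul_Tcone hc hy)

/-! ### Integer descent -/

lemma sum_ite_eq_genZ {N : ℕ} (j : Fin N) (a : ℤ) (v : Fin N → ℤ) :
    ∑ i, (if i = j then a else v i) = (∑ i, v i) + a - v j := by
  have h : ∀ i, (if i = j then a else v i) = v i + (if i = j then a - v j else 0) := by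
    intro i; by_cases h : i = j <;> simp [h]
  rw [Finset.sum_congr rfl fun i _ => h i, Finset.sum_add_distrib,
    Finset.sum_ite_eq' Finset.univ j (fun _ => a - v j)]
  simp; ring

lemma sfun_intCast {N : ℕ} (V : Fin N → ℤ) :
    sfun N (fun i => (V i : ℝ)) = ((∑ i, V i : ℤ) : ℝ) := by
  unfold sfun; push_cast; rfl

lemma key_int {N : ℕ} (hN : 3 ≤ N) :
    ∀ n : ℕ, ∀ V : Fin N → ℤ, (fun i => (V i : ℝ)) ∈ closure (Tcone N) →
      (∑ i, V i).toNat ≤ n →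
      ∃ g ∈ Ggrp N, (g : Matrix (Fin N) (Fin N) ℝ).mulVec (fun i => (V i : ℝ)) ∈ Dcone N := by
  have main : ∀ n : ℕ,
      (∀ m : ℕ, m < n → ∀ V : Fin N → ℤ, (fun i => (V i : ℝ)) ∈ closure (Tcone N) →
        (∑ i, V i).toNat ≤ m →
        ∃ g ∈ Ggrp N, (g : Matrix (Fin N) (Fin N) ℝ).mulVec (fun i => (V i : ℝ)) ∈ Dcone N) →
      ∀ V : Fin N → ℤ, (fun i => (V i : ℝ)) ∈ closure (Tcone N) →
      (∑ i, V i).toNat ≤ n →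
      ∃ g ∈ Ggrp N, (g : Matrix (Fin N) (Fin N) ℝ).mulVec (fun i => (V i : ℝ)) ∈ Dcone N := by
    intro n ih V hV hn
    by_cases hD : (fun i => (V i : ℝ)) ∈ Dcone N
    · exact ⟨1, one_mem _, by rwa [Units.val_one, Matrix.one_mulVec]⟩
    · -- find a negative wall
      simp only [Dcone, Set.mem_setOf_eq, not_forall, not_le] at hD
      obtain ⟨i, hi⟩ := hD
      rw [bform_single] at hi
      -- integer inequality
      have hiZ : (∑ k, V k) - 2 * V i ≤ -1 := by
        rw [sfun_intCast] at hi
        have h0 : ((∑ k, V k) - 2 * V i : ℤ) < 0 := by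
          have : (((∑ k, V k) - 2 * V i : ℤ) : ℝ) < 0 := by push_cast at hi ⊢; linarith
          exact_mod_cast this
        omega
      set V' : Fin N → ℤ := fun k => if k = i then 2 * (∑ l, V l) - 3 * V i else V k with hV'
      have hcast : (fun k => (V' k : ℝ)) = reflv N i (fun k => (V k : ℝ)) := by
        funext k
        by_cases hk : k = i
        · simp only [hV', hk, if_pos rfl, reflv, sfun_intCast]
          push_cast; ring
        · simp only [hV', if_neg hk, reflv, if_neg hk]
      have hV'mem : (fun k => (V' k : ℝ)) ∈ closure (Tcone N) := by
        rw [hcast]; exact reflv_mem_closure i hV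
      have hsum' : (∑ k, V' k) = (∑ k, V k) + 2 * ((∑ k, V k) - 2 * V i) := by
        rw [hV']
        rw [sum_ite_eq_genZ]
        ring
      have hpos' : 0 ≤ (∑ k, V' k) := by
        have := sfun_closure_nonneg hN hV'mem
        rw [sfun_intCast] at this
        exact_mod_cast this
      have hlt : (∑ k, V' k).toNat < n := by
        have hpos : 0 ≤ (∑ k, V k) := by
          have := sfun_closure_nonneg hN hV
          rw [sfun_intCast] at this
          exact_mod_cast this
        omega
      obtain ⟨g', hg', hDg⟩ := ih _ hlt V' hV'mem le_rfl
      refine ⟨g' * reflGL N i, mul_mem hg' (reflGL_mem i), ?_⟩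
      rw [Units.val_mul, ← Matrix.mulVec_mulVec,
        show ((reflGL N i : GL (Fin N) ℝ) : Matrix (Fin N) (Fin N) ℝ) = (Mmat N i)ᵀ from rfl,
        mulVec_Mt, ← hcast]
      exact hDg
  intro n
  induction n using Nat.strong_induction_on with
  | _ n ih => exact main n ih

/-! ### From rationals to integers -/

lemma key_rat {N : ℕ} (hN : 3 ≤ N) (v : Fin N → ℚ)
    (hv : (fun i => (v i : ℝ)) ∈ closure (Tcone N)) :
    ∃ g ∈ Ggrp N, (g : Matrix (Fin N) (Fin N) ℝ).mulVec (fun i => (v i : ℝ)) ∈ Dcone N := by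
  set d : ℕ := ∏ i, (v i).den with hd
  have hdpos : 0 < d := Finset.prod_pos fun i _ => (v i).pos
  have hddvd : ∀ i : Fin N, ((v i).den : ℤ) ∣ (d : ℤ) := fun i =>
    Int.natCast_dvd_natCast.mpr (Finset.dvd_prod_of_mem _ (Finset.mem_univ i))
  choose c hc using hddvd
  set V : Fin N → ℤ := fun i => (v i).num * c i with hV
  have hVq : ∀ i, ((V i : ℚ)) = (d : ℚ) * v i := by
    intro i
    have hden : ((v i).den : ℚ) ≠ 0 := by exact_mod_cast (v i).den_nz
    have hdq : (d : ℚ) = ((v i).den : ℚ) * (c i : ℚ) := by exact_mod_cast hc i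
    have h2 : ((v i).num : ℚ) = v i * ((v i).den : ℚ) := by
      have h3 := Rat.num_div_den (v i)
      rw [div_eq_iff hden] at h3
      exact h3
    rw [hV]
    push_cast
    rw [hdq, h2]
    ring
  have hcast : (fun i => ((V i : ℤ) : ℝ)) = (d : ℝ) • (fun i => ((v i : ℚ) : ℝ)) := by
    funext i
    have : ((V i : ℤ) : ℝ) = (((d : ℚ) * v i : ℚ) : ℝ) := by
      rw [← hVq i]; push_cast; rfl
    rw [this]
    push_cast
    simp [Pi.smul_apply, smul_eq_mul]
  have hdR : (0:ℝ) < (d : ℝ) := by exact_mod_cast hdpos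
  have hVmem : (fun i => ((V i : ℤ) : ℝ)) ∈ closure (Tcone N) := by
    rw [hcast]
    exact smul_mem_closure_Tcone hdR hv
  obtain ⟨g, hg, hD⟩ := key_int hN (∑ i, V i).toNat V hVmem le_rfl
  refine ⟨g, hg, fun i => ?_⟩
  have h1 := hD i
  rw [hcast, Matrix.mulVec_smul, bform_smul_left] at h1
  nlinarith [h1, hdR]

/-- Every rational point of the frontier of the closure of the Tits cone can be moved
into `D_N` by an element of `G_N`; in particular every rational vector of the closure
of `T_N` belongs to `T_N`. -/
theorem stmt11 (N : ℕ) (hN : 3 ≤ N) :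
    (∀ v : Fin N → ℚ,
      (fun i => (v i : ℝ)) ∈ frontier (closure (Tcone N)) →
        ∃ g ∈ Ggrp N,
          (g : Matrix (Fin N) (Fin N) ℝ).mulVec (fun i => (v i : ℝ)) ∈ Dcone N) ∧
    (∀ v : Fin N → ℚ,
      (fun i => (v i : ℝ)) ∈ closure (Tcone N) → (fun i => (v i : ℝ)) ∈ Tcone N) := by
  constructor
  · intro v hv
    have h1 : (fun i => (v i : ℝ)) ∈ closure (Tcone N) := by
      have h2 := frontier_subset_closure hv
      rwa [closure_closure] at h2
    exact key_rat hN v h1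
  · intro v hv
    obtain ⟨g, hg, hD⟩ := key_rat hN v hv
    refine ⟨g⁻¹, inv_mem hg, (g : Matrix (Fin N) (Fin N) ℝ).mulVec (fun i => (v i : ℝ)), hD, ?_⟩
    rw [Matrix.mulVec_mulVec, ← Units.val_mul, inv_mul_cancel, Units.val_one,
      Matrix.one_mulVec]
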